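/- The monoid I_n of all nondecreasing surjections f : {0,...,n−1} → {0,...,k−1} for some k ≤ n (equivalently, nondecreasing f : n → n with f(0) = 0 and f(i+1) ≤ f(i)+1), under composition, is R-trivial. -/
import Mathlib


/-- The monoid `I_n` of nondecreasing `f : n → n` with `f 0 = 0`
and `f (i+1) ≤ f i + 1`, under composition, is R-trivial: equality of
principal right ideals `f ∘ I_n = g ∘ I_n` implies `f = g`. -/
theorem stmt_6 (n : ℕ)
    (P : (Fin n → Fin n) → Prop)
    (hP : ∀ f, P f ↔ Monotone f ∧ (∀ h : 0 < n, f ⟨0, h⟩ = ⟨0, h⟩) ∧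
      ∀ (i : ℕ) (h : i + 1 < n), (f ⟨i + 1, h⟩ : ℕ) ≤ (f ⟨i, by omega⟩ : ℕ) + 1) :
    ∀ f g : Fin n → Fin n, P f → P g →
      {h | ∃ m, P m ∧ h = f ∘ m} = {h | ∃ m, P m ∧ h = g ∘ m} → f = g := by
  intro f g hf hg hset
  have hid : P id := by
    rw [hP]
    exact ⟨monotone_id, fun h => rfl, fun i h => by simp⟩
  have key : ∀ m : Fin n → Fin n, P m → ∀ i : Fin n, (m i : ℕ) ≤ i := by
    intro m hm i
    rw [hP] at hm
    obtain ⟨hmono, h0, hstep⟩ := hm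
    obtain ⟨v, hv⟩ := i
    induction v with
    | zero => simp [h0 (by omega)]
    | succ k ih =>
      have h1 := hstep k hv
      have h2 := ih (by omega)
      simp only [Fin.val_mk] at h1 h2 ⊢
      omega
  have hf' : f ∈ {h | ∃ m, P m ∧ h = f ∘ m} := ⟨id, hid, rfl⟩
  rw [hset] at hf'
  obtain ⟨a, ha, hfa⟩ := hf'
  have hg' : g ∈ {h | ∃ m, P m ∧ h = g ∘ m} := ⟨id, hid, rfl⟩
  rw [← hset] at hg'
  obtain ⟨b, hb, hgb⟩ := hg'
  funext i
  have hgm : Monotone g := ((hP g).1 hg).1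
  have hfm : Monotone f := ((hP f).1 hf).1
  have h1 : f i = g (a i) := congrFun hfa i
  have h2 : g i = f (b i) := congrFun hgb i
  have le1 : f i ≤ g i := h1 ▸ hgm (Fin.le_def.mpr (key a ha i))
  have le2 : g i ≤ f i := h2 ▸ hfm (Fin.le_def.mpr (key b hb i))
  exact le_antisymm le1 le2
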